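/- For every integer r and all natural numbers ℓ, s with r ≤ s: Σ_{b=0}^{s−r−1} (b+r−s)_ℓ · (b)_s = (−1)^{s+1} · ℓ! · s! · binom(r, s+ℓ+1), an identity of integers. -/
import Mathlib


/-- The falling factorial `(a)_k = a(a−1)⋯(a−k+1)` for `a : ℤ`, with `(a)_0 = 1`. -/
def fallFact (a : ℤ) (k : ℕ) : ℤ := ∏ i ∈ Finset.range k, (a - i)

/-- The generalized binomial coefficient `binom(a,k) = (a)_k / k! ∈ ℤ`
for `a : ℤ` and `k : ℕ` (the division is exact). -/
def intBinom (a : ℤ) (k : ℕ) : ℤ := fallFact a k / (k.factorial : ℤ)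

lemma fallFact_succ (a : ℤ) (k : ℕ) : fallFact a (k+1) = fallFact a k * (a - k) := by
  simp [fallFact, Finset.prod_range_succ]

lemma fallFact_cast (n k : ℕ) : fallFact (n : ℤ) k = (n.descFactorial k : ℤ) := by
  induction k with
  | zero => simp [fallFact]
  | succ k ih =>
    rw [fallFact_succ, ih, Nat.descFactorial_succ]
    rcases le_or_gt k n with hk | hk
    · push_cast [Nat.cast_sub hk]
      ring
    · simp [Nat.descFactorial_of_lt hk]

lemma fallFact_neg (m k : ℕ) : fallFact (-(m:ℤ) - 1) k = (-1)^k * ((m + k).descFactorial k : ℤ) := by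
  induction k with
  | zero => simp [fallFact]
  | succ k ih =>
    have h : (m + (k+1)).descFactorial (k+1) = (m+k+1) * (m+k).descFactorial k := by
      rw [show m + (k+1) = (m+k)+1 from rfl]
      exact Nat.succ_descFactorial_succ _ _
    rw [fallFact_succ, ih, h]
    push_cast
    ring

lemma sum_Icc_eq (n : ℕ) (f : ℤ → ℤ) :
    ∑ b ∈ Finset.Icc (0:ℤ) ((n:ℤ)-1), f b = ∑ j ∈ Finset.range n, f j := by
  induction n with
  | zero =>
    rw [Finset.Icc_eq_empty (by norm_num)]
    simp
  | succ n ih =>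
    have h1 : ((n+1:ℕ):ℤ) - 1 = (n:ℤ) := by push_cast; ring
    have h2 : Finset.Icc (0:ℤ) (n:ℤ) = insert (n:ℤ) (Finset.Icc 0 ((n:ℤ)-1)) := by
      ext x; simp only [Finset.mem_Icc, Finset.mem_insert]; omega
    rw [h1, h2, Finset.sum_insert (by simp only [Finset.mem_Icc]; omega), ih,
      Finset.sum_range_succ, add_comm]

lemma key (ℓ : ℕ) : ∀ s m : ℕ,
    ∑ i ∈ Finset.range (m+1), ((m - i) + ℓ).choose ℓ * (s+i).choose s
      = (ℓ + s + m + 1).choose m := by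
  induction ℓ with
  | zero =>
    intro s m
    induction m with
    | zero => simp
    | succ m ih =>
      simp only [Nat.add_zero, Nat.choose_zero_right, one_mul] at ih ⊢
      rw [Finset.sum_range_succ, ih]
      have h1 : (s + (m+1)).choose s = (s+m+1).choose (m+1) := by
        have := Nat.choose_symm (n := s+m+1) (k := s) (by omega)
        rw [show s+m+1-s = m+1 by omega] at this
        rw [show s+(m+1) = s+m+1 by omega, ← this]
      have h3 : (0+s+(m+1)+1).choose (m+1) = (s+m+1).choose m + (s+m+1).choose (m+1) := by
        rw [show 0+s+(m+1)+1 = (s+m+1)+1 by omega]; exact Nat.choose_succ_succ' _ _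
      rw [h1, h3, show (0:ℕ)+s+m+1 = s+m+1 by omega]
  | succ ℓ ihℓ =>
    intro s m
    induction m with
    | zero => simp
    | succ m ih =>
      have step : ∀ i ∈ Finset.range (m+2),
          ((m+1-i)+(ℓ+1)).choose (ℓ+1) * (s+i).choose s
            = ((m+1-i)+ℓ).choose ℓ * (s+i).choose s
              + ((m+1-i)+ℓ).choose (ℓ+1) * (s+i).choose s := by
        intro i _
        rw [show (m+1-i)+(ℓ+1) = ((m+1-i)+ℓ)+1 by omega, Nat.choose_succ_succ', add_mul]
      rw [Finset.sum_congr rfl step, Finset.sum_add_distrib]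
      have hA : ∑ i ∈ Finset.range (m+2), ((m+1-i)+ℓ).choose ℓ * (s+i).choose s
          = (ℓ + s + (m+1) + 1).choose (m+1) := ihℓ s (m+1)
      have hB : ∑ i ∈ Finset.range (m+2), ((m+1-i)+ℓ).choose (ℓ+1) * (s+i).choose s
          = ((ℓ+1) + s + m + 1).choose m := by
        rw [Finset.sum_range_succ]
        have hlast : ((m+1-(m+1))+ℓ).choose (ℓ+1) = 0 := by
          simp [Nat.choose_eq_zero_of_lt]
        rw [hlast, zero_mul, add_zero]
        have hstep2 : ∑ i ∈ Finset.range (m+1), ((m+1-i)+ℓ).choose (ℓ+1) * (s+i).choose s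
            = ∑ i ∈ Finset.range (m+1), ((m-i)+(ℓ+1)).choose (ℓ+1) * (s+i).choose s := by
          apply Finset.sum_congr rfl
          intro i hi
          rw [Finset.mem_range] at hi
          rw [show (m+1-i)+ℓ = (m-i)+(ℓ+1) by omega]
        rw [hstep2, ih]
      have h4 : ((ℓ+1)+s+(m+1)+1).choose (m+1)
          = (ℓ+s+m+2).choose m + (ℓ+s+m+2).choose (m+1) := by
        rw [show (ℓ+1)+s+(m+1)+1 = (ℓ+s+m+2)+1 by omega]; exact Nat.choose_succ_succ' _ _
      rw [hA, hB, h4, show ℓ+s+(m+1)+1 = ℓ+s+m+2 by omega,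
        show (ℓ+1)+s+m+1 = ℓ+s+m+2 by omega, add_comm]

/-- for every integer `r` and all naturals `ℓ, s` with `r ≤ s`:
`Σ_{b=0}^{s−r−1} (b+r−s)_ℓ (b)_s = (−1)^{s+1} ℓ! s! binom(r, s+ℓ+1)`. -/
theorem stmt11 (r : ℤ) (ℓ s : ℕ) (h : r ≤ (s : ℤ)) :
    ∑ b ∈ Finset.Icc (0 : ℤ) ((s : ℤ) - r - 1), fallFact (b + r - s) ℓ * fallFact b s
      = (-1) ^ (s + 1) * (ℓ.factorial : ℤ) * (s.factorial : ℤ) * intBinom r (s + ℓ + 1) := by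
  rcases le_or_gt 0 r with hr | hr
  · -- nonnegative case: both sides vanish
    obtain ⟨t, rfl⟩ := Int.eq_ofNat_of_zero_le hr
    have hL : ∑ b ∈ Finset.Icc (0 : ℤ) ((s : ℤ) - (t:ℤ) - 1),
        fallFact (b + (t:ℤ) - s) ℓ * fallFact b s = 0 := by
      apply Finset.sum_eq_zero
      intro b hb
      rw [Finset.mem_Icc] at hb
      obtain ⟨b', rfl⟩ := Int.eq_ofNat_of_zero_le hb.1
      have hb' : b' < s := by
        have := hb.2
        omega
      rw [fallFact_cast, Nat.descFactorial_of_lt hb', Nat.cast_zero, mul_zero]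
    have hF : fallFact ((t:ℤ)) (s+ℓ+1) = 0 := by
      have hts : t ≤ s := by exact_mod_cast h
      rw [fallFact_cast, Nat.descFactorial_of_lt (by omega), Nat.cast_zero]
    rw [hL]
    simp [intBinom, hF]
  · -- negative case: r = -(m+1)
    obtain ⟨m, rfl⟩ : ∃ m : ℕ, r = -(m:ℤ) - 1 := ⟨(-r-1).toNat, by omega⟩
    have hIcc : (s:ℤ) - (-(m:ℤ)-1) - 1 = ((s+m+1 : ℕ):ℤ) - 1 := by push_cast; ring
    rw [hIcc,
      sum_Icc_eq (s+m+1) (fun b => fallFact (b + (-(m:ℤ)-1) - s) ℓ * fallFact b s)]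
    rw [show s+m+1 = s+(m+1) by omega,
      Finset.sum_range_add (fun j => fallFact ((j:ℤ) + (-(m:ℤ)-1) - s) ℓ * fallFact (j:ℤ) s) s (m+1)]
    have hzero : ∑ j ∈ Finset.range s,
        fallFact ((j:ℤ) + (-(m:ℤ)-1) - s) ℓ * fallFact (j:ℤ) s = 0 := by
      apply Finset.sum_eq_zero
      intro j hj
      rw [Finset.mem_range] at hj
      rw [fallFact_cast, Nat.descFactorial_of_lt hj, Nat.cast_zero, mul_zero]
    have hterm : ∀ i ∈ Finset.range (m+1),
        fallFact (((s+i:ℕ):ℤ) + (-(m:ℤ)-1) - (s:ℤ)) ℓ * fallFact ((s+i:ℕ):ℤ) s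
          = (-1)^ℓ * ((((m-i)+ℓ).descFactorial ℓ * (s+i).descFactorial s : ℕ) : ℤ) := by
      intro i hi
      rw [Finset.mem_range] at hi
      have hmi : ((m-i:ℕ):ℤ) = (m:ℤ) - i := by omega
      have harg : ((s+i:ℕ):ℤ) + (-(m:ℤ)-1) - (s:ℤ) = -((m-i:ℕ):ℤ) - 1 := by
        rw [hmi]; push_cast; ring
      rw [harg, fallFact_neg, fallFact_cast]
      push_cast
      ring
    rw [hzero, zero_add, Finset.sum_congr rfl hterm, ← Finset.mul_sum, ← Nat.cast_sum]
    have hnat : ∑ i ∈ Finset.range (m+1),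
        ((m-i)+ℓ).descFactorial ℓ * (s+i).descFactorial s
          = ℓ.factorial * s.factorial * (ℓ+s+m+1).choose m := by
      have hpt : ∀ i ∈ Finset.range (m+1),
          ((m-i)+ℓ).descFactorial ℓ * (s+i).descFactorial s
            = ℓ.factorial * s.factorial * (((m-i)+ℓ).choose ℓ * (s+i).choose s) := by
        intro i _
        rw [Nat.descFactorial_eq_factorial_mul_choose, Nat.descFactorial_eq_factorial_mul_choose]
        ring
      rw [Finset.sum_congr rfl hpt, ← Finset.mul_sum, key]
    have hRHS : intBinom (-(m:ℤ)-1) (s+ℓ+1)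
        = (-1)^(s+ℓ+1) * (((m+s+ℓ+1).choose (s+ℓ+1) : ℕ) : ℤ) := by
      unfold intBinom
      have hnum : fallFact (-(m:ℤ)-1) (s+ℓ+1)
          = ((s+ℓ+1).factorial : ℤ) * ((-1)^(s+ℓ+1) * (((m+s+ℓ+1).choose (s+ℓ+1) : ℕ) : ℤ)) := by
        rw [fallFact_neg, show m + (s+ℓ+1) = m+s+ℓ+1 by omega,
          Nat.descFactorial_eq_factorial_mul_choose]
        push_cast
        ring
      rw [hnum, Int.mul_ediv_cancel_left _ (by exact_mod_cast Nat.factorial_ne_zero (s+ℓ+1))]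
    rw [hnat, hRHS]
    have h6 := Nat.choose_symm (n := ℓ+s+m+1) (k := s+ℓ+1) (by omega)
    rw [show ℓ+s+m+1 - (s+ℓ+1) = m by omega] at h6
    rw [show m+s+ℓ+1 = ℓ+s+m+1 by omega, ← h6]
    have hsign : ((-1:ℤ))^(s+1) * (-1)^(s+ℓ+1) = (-1)^ℓ := by
      rw [← pow_add, show s+1+(s+ℓ+1) = 2*(s+1)+ℓ by ring, pow_add, pow_mul]
      norm_num
    rw [← hsign]
    push_cast
    ring
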